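/- Every pre-circumscription satisfying cumulative transitivity (CT) is a KLM entailment: if f is a pre-circumscription such that for all T, T' with T' ⊆ f(T) one has f(T ∪ T') ⊆ f(T), then there exists a KLM model (S, l, ≺) whose KLM entailment C_KLM equals f on all sets of formulas. -/

import Mathlib

/-- Formulas of a propositional language over variables `V`. -/
inductive Formula (V : Type) : Type
  | var : V → Formula V
  | neg : Formula V → Formula V
  | and : Formula V → Formula V → Formula V
  | or  : Formula V → Formula V → Formula V
  | imp : Formula V → Formula V → Formula V

/-- Classical satisfaction of a formula by an interpretation `μ ⊆ V`. -/
def Formula.Sat {V : Type} (μ : Set V) : Formula V → Prop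
  | .var v => v ∈ μ
  | .neg φ => ¬ Formula.Sat μ φ
  | .and φ ψ => Formula.Sat μ φ ∧ Formula.Sat μ ψ
  | .or φ ψ => Formula.Sat μ φ ∨ Formula.Sat μ ψ
  | .imp φ ψ => Formula.Sat μ φ → Formula.Sat μ ψ

/-- Classical consequence: every model of `T` satisfies `φ`. -/
def Entails {V : Type} (T : Set (Formula V)) (φ : Formula V) : Prop :=
  ∀ μ : Set V, (∀ ψ ∈ T, Formula.Sat μ ψ) → Formula.Sat μ φ

/-- `Th T` = set of classical consequences of `T`. -/
def Th {V : Type} (T : Set (Formula V)) : Set (Formula V) :=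
  {φ | Entails T φ}

/-- A theory is a deductively closed set of formulas. -/
def IsTheory {V : Type} (T : Set (Formula V)) : Prop :=
  Th T = T

/-- A pre-circumscription: values are theories, it is extensive,
and it respects full logical equivalence. -/
def IsPreCirc {V : Type} (f : Set (Formula V) → Set (Formula V)) : Prop :=
  (∀ T, IsTheory (f T)) ∧ (∀ T, T ⊆ f T) ∧
  (∀ T₁ T₂, Th T₁ = Th T₂ → f T₁ = f T₂)

/-- For a KLM model with labelling `l`, the set `S(T)` of states satisfying `T`. -/
def klmStates {V σ : Type} (l : σ → Set (Formula V)) (T : Set (Formula V)) : Set σ :=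
  {s | Th T ⊆ l s}

/-- The set `S_≺(T)` of `≺`-minimal states among those satisfying `T` (KLM model). -/
def klmMin {V σ : Type} (l : σ → Set (Formula V)) (prec : σ → σ → Prop)
    (T : Set (Formula V)) : Set σ :=
  {s | s ∈ klmStates l T ∧ ∀ s' ∈ klmStates l T, ¬ prec s' s}

/-- The KLM entailment defined by a KLM model `(σ, l, prec)`. -/
def CKLM {V σ : Type} (l : σ → Set (Formula V)) (prec : σ → σ → Prop)
    (T : Set (Formula V)) : Set (Formula V) :=
  {φ | ∀ s ∈ klmMin l prec T, φ ∈ l s}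

/-- Smoothness (stopperedness) of a KLM model. -/
def klmSmooth {V σ : Type} (l : σ → Set (Formula V)) (prec : σ → σ → Prop) : Prop :=
  ∀ T : Set (Formula V), ∀ s ∈ klmStates l T, s ∉ klmMin l prec T →
    ∃ s' ∈ klmMin l prec T, prec s' s

/-- For a MAK model with satisfaction relation `sat`, the set `S(T)` of states
satisfying every formula of `T`. -/
def makStates {V σ : Type} (sat : σ → Formula V → Prop) (T : Set (Formula V)) : Set σ :=
  {s | ∀ φ ∈ T, sat s φ}

/-- The set `S_≺(T)` of `≺`-minimal states among those satisfying `T` (MAK model). -/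
def makMin {V σ : Type} (sat : σ → Formula V → Prop) (prec : σ → σ → Prop)
    (T : Set (Formula V)) : Set σ :=
  {s | s ∈ makStates sat T ∧ ∀ s' ∈ makStates sat T, ¬ prec s' s}

/-- The MAK entailment defined by a MAK model `(σ, sat, prec)`. -/
def CMAK {V σ : Type} (sat : σ → Formula V → Prop) (prec : σ → σ → Prop)
    (T : Set (Formula V)) : Set (Formula V) :=
  {φ | ∀ s ∈ makMin sat prec T, sat s φ}

/-- The (monotonic) Tarski entailment `Cn_⊨` of a MAK model. -/
def Cn {V σ : Type} (sat : σ → Formula V → Prop) (T : Set (Formula V)) : Set (Formula V) :=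
  {φ | ∀ s ∈ makStates sat T, sat s φ}

/-- The set `Cn_⊨(s)` of formulas satisfied by a state `s` of a MAK model. -/
def CnState {V σ : Type} (sat : σ → Formula V → Prop) (s : σ) : Set (Formula V) :=
  {φ | sat s φ}

lemma subset_Th {V : Type} (T : Set (Formula V)) : T ⊆ Th T := by
  intro φ hφ μ hμ; exact hμ φ hφ

lemma Th_mono {V : Type} {T T' : Set (Formula V)} (h : T ⊆ T') : Th T ⊆ Th T' := by
  intro φ hφ μ hμ; exact hφ μ (fun ψ hψ => hμ ψ (h hψ))

lemma Th_idem {V : Type} (T : Set (Formula V)) : Th (Th T) = Th T := by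
  apply Set.Subset.antisymm
  · intro φ hφ μ hμ
    exact hφ μ (fun ψ hψ => hψ μ hμ)
  · exact subset_Th _

lemma Th_subset_of_isTheory {V : Type} {T S : Set (Formula V)} (hS : IsTheory S)
    (h : T ⊆ S) : Th T ⊆ S := by
  rw [← hS]; exact Th_mono h

lemma Th_union_eq {V : Type} {s T : Set (Formula V)} (h : s ⊆ Th T) :
    Th (s ∪ T) = Th T := by
  apply Set.Subset.antisymm
  · rw [← Th_idem T]
    exact Th_mono (Set.union_subset h (subset_Th T))
  · exact Th_mono Set.subset_union_right

/-- Every pre-circumscription satisfying (CT) is a KLM entailment. -/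
theorem preCirc_CT_is_klm {V : Type} (f : Set (Formula V) → Set (Formula V))
    (hf : IsPreCirc f)
    (hCT : ∀ T T' : Set (Formula V), T' ⊆ f T → f (T ∪ T') ⊆ f T) :
    ∃ (σ : Type) (l : σ → Set (Formula V)) (prec : σ → σ → Prop),
      (∀ s : σ, IsTheory (l s)) ∧ ∀ T : Set (Formula V), CKLM l prec T = f T := by
  obtain ⟨hth, hext, hcong⟩ := hf
  refine ⟨Set (Formula V) × Bool,
    fun p => if p.2 then f p.1 else Th p.1,
    fun p' p => (p.2 = false ∧ p' = p) ∨ (p.2 = true ∧ p'.2 = false ∧ ¬ (p.1 ⊆ Th p'.1)),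
    ?_, ?_⟩
  · rintro ⟨s, b⟩
    cases b
    · simpa [IsTheory] using (Th_idem s)
    · simpa using (hth s)
  · intro T
    have hThf : ∀ U, Th U ⊆ f U := fun U => Th_subset_of_isTheory (hth U) (hext U)
    -- characterization of minimal states
    have hmin : klmMin (fun p : Set (Formula V) × Bool => if p.2 then f p.1 else Th p.1)
        (fun p' p => (p.2 = false ∧ p' = p) ∨ (p.2 = true ∧ p'.2 = false ∧ ¬ (p.1 ⊆ Th p'.1))) T
        = {p | p.2 = true ∧ Th T ⊆ f p.1 ∧ p.1 ⊆ Th T} := by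
      ext ⟨s, b⟩
      constructor
      · rintro ⟨hmem, hnoatt⟩
        cases b with
        | false =>
          exact absurd (Or.inl ⟨rfl, rfl⟩) (hnoatt (s, false) hmem)
        | true =>
          simp only [klmStates, Set.mem_setOf_eq, if_pos] at hmem
          refine ⟨rfl, hmem, ?_⟩
          by_contra hns
          have hmem' : (Th T, false) ∈ klmStates
              (fun p : Set (Formula V) × Bool => if p.2 then f p.1 else Th p.1) T := by
            simp only [klmStates, Set.mem_setOf_eq, if_neg Bool.false_ne_true, Th_idem]
            · exact le_refl _
          exact hnoatt (Th T, false) hmem' (Or.inr ⟨rfl, rfl, by simpa [Th_idem] using hns⟩)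
      · rintro ⟨hb, hmem, hsub⟩
        simp only at hb; subst hb
        constructor
        · simpa [klmStates] using hmem
        · rintro ⟨s', b'⟩ hmem' (⟨h1, _⟩ | ⟨_, h2, h3⟩)
          · simp at h1
          · simp only at h2; subst h2
            simp only [klmStates, Set.mem_setOf_eq, if_neg Bool.false_ne_true] at hmem'
            exact h3 (hsub.trans hmem')
    -- now compute CKLM
    ext φ
    simp only [CKLM, Set.mem_setOf_eq, hmin]
    constructor
    · intro h
      have := h (T, true) ⟨rfl, hThf T, subset_Th T⟩
      simpa using this
    · intro hφ ⟨s, b⟩ hp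
      obtain ⟨hb, hmem, hsub⟩ := hp
      simp only at hb; subst hb
      simp only [if_pos]
      -- f T ⊆ f s
      have h1 : f (s ∪ T) ⊆ f s := hCT s T (fun ψ hψ => hmem ((subset_Th T) hψ))
      have h2 : f (s ∪ T) = f T := hcong _ _ (Th_union_eq hsub)
      exact h1 (h2 ▸ hφ)
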